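/- A finite simple graph G is perfect if and only if its complement is perfect. (Weak Perfect Graph Theorem) -/

import Mathlib

open SimpleGraph Finset

namespace WPGTaux
variable {V : Type*} {W : Type*}




lemma induce_compl_eq (G : SimpleGraph V) (s : Set V) :
    (Gᶜ.induce s) = (G.induce s)ᶜ := by
  ext a b
  simp [Subtype.ext_iff, compl_adj]

/-- map an n-clique through a graph embedding -/
lemma isNClique_map_embedding {G : SimpleGraph V} {G' : SimpleGraph W} (f : G ↪g G')
    {n : ℕ} {C : Finset V} (h : G.IsNClique n C) :
    G'.IsNClique n (C.map f.toEmbedding) := by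
  constructor
  · rintro x hx y hy hxy
    simp only [Finset.coe_map, Set.mem_image, Finset.mem_coe] at hx hy
    obtain ⟨a, ha, rfl⟩ := hx
    obtain ⟨b, hb, rfl⟩ := hy
    have hab : a ≠ b := fun h' => hxy (by rw [h'])
    exact f.map_adj_iff.mpr (h.1 ha hb hab)
  · rw [Finset.card_map, h.2]

lemma cliqueNum_le_of_embedding [Fintype V] [Fintype W] {G : SimpleGraph V}
    {G' : SimpleGraph W} (f : G ↪g G') : G.cliqueNum ≤ G'.cliqueNum := by
  obtain ⟨C, hC⟩ := G.exists_isNClique_cliqueNum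
  have h := isNClique_map_embedding f hC
  have := IsClique.card_le_cliqueNum (G := G') (tc := h.1)
  rwa [Finset.card_map, hC.2] at this

lemma cliqueNum_eq_of_iso [Fintype V] [Fintype W] {G : SimpleGraph V}
    {G' : SimpleGraph W} (e : G ≃g G') : G.cliqueNum = G'.cliqueNum :=
  le_antisymm (cliqueNum_le_of_embedding e.toEmbedding)
    (cliqueNum_le_of_embedding e.symm.toEmbedding)

/-- complement iso -/
def isoCompl {G : SimpleGraph V} {G' : SimpleGraph W} (e : G ≃g G') : Gᶜ ≃g G'ᶜ where
  toEquiv := e.toEquiv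
  map_rel_iff' := by
    intro a b
    simp only [compl_adj, EmbeddingLike.apply_eq_iff_eq, ne_eq]
    exact and_congr Iff.rfl (not_congr e.map_adj_iff)

/-- induce of induce is induce of the image -/
noncomputable def induceInduceIso (G : SimpleGraph V) (s : Set V) (t : Set ↥s) :
    (G.induce s).induce t ≃g G.induce (Subtype.val '' t) where
  toEquiv := Equiv.Set.image Subtype.val t Subtype.val_injective
  map_rel_iff' := by
    intro a b
    rfl


/-- Extend a coloring of `H - S` by one extra color on a stable set `S`. -/
lemma colorable_succ_of_stable (H : SimpleGraph W) (S : Set W)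
    (hS : ∀ a ∈ S, ∀ b ∈ S, a ≠ b → ¬H.Adj a b) {k : ℕ}
    (hc : (H.induce Sᶜ).Colorable k) : H.Colorable (k + 1) := by
  obtain ⟨c⟩ := hc
  classical
  refine ⟨Coloring.mk (fun w => if h : w ∈ S then Fin.last k
      else (c ⟨w, h⟩).castSucc) ?_⟩
  intro a b hab heq
  by_cases ha : a ∈ S <;> by_cases hb : b ∈ S
  · exact hS a ha b hb (H.ne_of_adj hab) hab
  · rw [dif_pos ha, dif_neg hb] at heq
    exact absurd heq.symm (Fin.castSucc_lt_last _).ne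
  · rw [dif_neg ha, dif_pos hb] at heq
    exact absurd heq (Fin.castSucc_lt_last _).ne
  · rw [dif_neg ha, dif_neg hb] at heq
    have hadj : (H.induce Sᶜ).Adj ⟨a, ha⟩ ⟨b, hb⟩ := hab
    exact c.valid hadj (Fin.castSucc_injective _ heq)

/-- If a coloring misses a color, we can color with one fewer color. -/
lemma colorable_of_missing_color (H : SimpleGraph W) {k : ℕ}
    (c : H.Coloring (Fin (k + 1))) (j : Fin (k + 1)) (hj : ∀ w, c w ≠ j) :
    H.Colorable k := by
  have hsome : ∀ w, (finSuccEquiv' j (c w)).isSome := by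
    intro w
    rcases h : finSuccEquiv' j (c w) with _ | x
    · exact absurd ((finSuccEquiv' j).injective (h.trans (finSuccEquiv'_at j).symm)) (hj w)
    · rfl
  refine ⟨Coloring.mk (fun w => (finSuccEquiv' j (c w)).get (hsome w)) ?_⟩
  intro a b hab heq
  apply c.valid hab
  have := congrArg (Option.some) heq
  rw [Option.some_get, Option.some_get] at this
  exact (finSuccEquiv' j).injective this

/-- `ω ≤ k` for a `k`-colorable graph. -/
lemma cliqueNum_le_of_colorable [Fintype W] (H : SimpleGraph W) {k : ℕ}
    (hc : H.Colorable k) : H.cliqueNum ≤ k := by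
  obtain ⟨C, hC⟩ := H.exists_isNClique_cliqueNum
  obtain ⟨c⟩ := hc
  rw [← hC.2]
  calc #C ≤ Fintype.card (Fin k) := by
        apply Finset.card_le_card_of_injOn c
        · intro x _; exact Finset.mem_univ _
        · intro x hx y hy hxy
          by_contra hne
          exact c.valid (hC.1 hx hy hne) hxy
    _ = k := Fintype.card_fin k

/-- If colorable with the clique number, then χ = ω. -/
lemma chromaticNumber_eq_cliqueNum_of_colorable [Fintype W] (H : SimpleGraph W)
    (hc : H.Colorable H.cliqueNum) : H.chromaticNumber = (H.cliqueNum : ℕ∞) := by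
  refine le_antisymm hc.chromaticNumber_le ?_
  have h1 := H.colorable_chromaticNumber_of_fintype
  have h2 := cliqueNum_le_of_colorable H h1
  have h3 : H.chromaticNumber ≠ ⊤ := by
    intro h
    have := hc.chromaticNumber_le
    rw [h] at this
    exact absurd (top_le_iff.mp this) (by simp)
  calc (H.cliqueNum : ℕ∞) ≤ (H.chromaticNumber.toNat : ℕ∞) := by exact_mod_cast h2
    _ = H.chromaticNumber := ENat.coe_toNat h3

/-- conversely, χ = ω implies colorable with ω colors -/
lemma colorable_cliqueNum_of_chrom_eq [Fintype W] (H : SimpleGraph W)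
    (h : H.chromaticNumber = (H.cliqueNum : ℕ∞)) : H.Colorable H.cliqueNum := by
  have h1 := H.colorable_chromaticNumber_of_fintype
  rwa [h, ENat.toNat_coe] at h1

/-- `|W| ≤ k * α` for a `k`-colorable graph. -/
lemma card_le_mul_of_colorable [Fintype W] (H : SimpleGraph W) {k : ℕ}
    (hc : H.Colorable k) : Fintype.card W ≤ k * Hᶜ.cliqueNum := by
  classical
  obtain ⟨c⟩ := hc
  have hcard : (Finset.univ : Finset W).card =
      ∑ j : Fin k, ((Finset.univ : Finset W).filter (fun w => c w = j)).card :=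
    Finset.card_eq_sum_card_fiberwise (fun x _ => Finset.mem_univ _)
  rw [← Finset.card_univ, hcard]
  have hle : ∀ j : Fin k,
      ((Finset.univ : Finset W).filter (fun w => c w = j)).card ≤ Hᶜ.cliqueNum := by
    intro j
    have hclique : Hᶜ.IsClique ((Finset.univ : Finset W).filter (fun w => c w = j)) := by
      intro a ha b hb hne
      simp only [Finset.coe_filter, Set.mem_setOf_eq] at ha hb
      refine ⟨hne, fun hadj => c.valid hadj (ha.2.trans hb.2.symm)⟩
    exact IsClique.card_le_cliqueNum (tc := hclique)
  calc ∑ j : Fin k, ((Finset.univ : Finset W).filter (fun w => c w = j)).card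
      ≤ ∑ _j : Fin k, Hᶜ.cliqueNum := Finset.sum_le_sum (fun j _ => hle j)
    _ = k * Hᶜ.cliqueNum := by simp [Finset.sum_const, mul_comm]

lemma matrix_card_le {I W : Type*} [Fintype I] [Fintype W] [DecidableEq I]
    (hI : 2 ≤ Fintype.card I) (A : Matrix I W ℚ) (B : Matrix W I ℚ)
    (h : A * B = Matrix.of fun p q => if p = q then 0 else 1) :
    Fintype.card I ≤ Fintype.card W := by
  set m : ℕ := Fintype.card I with hm
  set a : ℚ := ((m : ℚ) - 1)⁻¹ with ha
  have hm1 : (m : ℚ) - 1 ≠ 0 := by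
    have : (2 : ℚ) ≤ (m : ℚ) := by exact_mod_cast hI
    intro hc; nlinarith
  set N : Matrix I I ℚ := Matrix.of fun p q => if p = q then 0 else 1 with hN
  set N' : Matrix I I ℚ := Matrix.of fun p q => a - if p = q then 1 else 0 with hN'
  have hNN' : N * N' = 1 := by
    ext p q
    rw [Matrix.mul_apply]
    have hterm : ∀ r : I, N p r * N' r q =
        ((a - if r = q then 1 else 0) - (if p = r then (a - if r = q then 1 else 0) else 0)) := by
      intro r
      simp only [hN, hN', Matrix.of_apply]
      split_ifs with h1 h2 <;> ring
    rw [Finset.sum_congr rfl (fun r _ => hterm r)]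
    rw [Finset.sum_sub_distrib, Finset.sum_sub_distrib]
    rw [Finset.sum_ite_eq' Finset.univ q (fun _ => (1:ℚ))]
    rw [Finset.sum_ite_eq Finset.univ p (fun r => a - if r = q then (1:ℚ) else 0)]
    simp only [Finset.mem_univ, if_true, Finset.sum_const, Finset.card_univ, nsmul_eq_mul]
    rw [Matrix.one_apply]
    have hm1' : (-1 + (Fintype.card I : ℚ)) ≠ 0 := by
      simp only [hm] at hm1
      intro hc; exact hm1 (by linarith)
    by_cases hpq : p = q
    · simp only [hpq, if_true, ha, hm]
      have hc : ((Fintype.card I : ℚ) - 1) ≠ 0 := by intro h0; apply hm1'; linarith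
      rw [show ∀ x : ℚ, x * (x - 1)⁻¹ - 1 - ((x - 1)⁻¹ - 1) = (x - 1) / (x - 1) by intro x; ring,
        div_self hc]
    · simp only [hpq, if_false, ha, hm]
      have hc : ((Fintype.card I : ℚ) - 1) ≠ 0 := by intro h0; apply hm1'; linarith
      rw [show ∀ x : ℚ, x * (x - 1)⁻¹ - 1 - ((x - 1)⁻¹ - 0) = (x - 1) / (x - 1) - 1 by
        intro x; ring, div_self hc, sub_self]
  have hinv : Invertible N := invertibleOfRightInverse N N' hNN'
  have hrank : N.rank = m := Matrix.rank_of_isUnit N (isUnit_of_invertible N)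
  have h1 : (A * B).rank ≤ B.rank := Matrix.rank_mul_le_right A B
  have h2 : B.rank ≤ Fintype.card W := Matrix.rank_le_card_height B
  rw [h, ← hN] at *
  omega

def Cond (G : SimpleGraph V) : Prop :=
  ∀ s : Set V, Nat.card s ≤ (G.induce s).cliqueNum * ((G.induce s)ᶜ).cliqueNum

lemma cond_induce [Fintype V] {G : SimpleGraph V} (h : Cond G) (s : Set V) :
    Cond (G.induce s) := by
  intro t
  haveI : Fintype ↥s := Fintype.ofFinite _
  haveI : Fintype ↥t := Fintype.ofFinite _
  haveI : Fintype ↥(Subtype.val '' t) := Fintype.ofFinite _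
  have e := induceInduceIso G s t
  rw [cliqueNum_eq_of_iso e, cliqueNum_eq_of_iso (isoCompl e)]
  have hcard : Nat.card t = Nat.card ↥(Subtype.val '' t) :=
    Nat.card_congr (Equiv.Set.image _ _ Subtype.val_injective)
  rw [hcard]
  exact h _

lemma cond_compl {G : SimpleGraph V} (h : Cond G) : Cond Gᶜ := by
  intro s
  rw [induce_compl_eq, compl_compl]
  have := h s
  rw [mul_comm] at this
  exact this

lemma colorable_pred_of_missing_color (H : SimpleGraph W) {k : ℕ} (hk : 1 ≤ k)
    (c : H.Coloring (Fin k)) (j : Fin k) (hj : ∀ w, c w ≠ j) : H.Colorable (k - 1) := by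
  obtain ⟨k', rfl⟩ : ∃ k', k = k' + 1 := ⟨k - 1, by omega⟩
  simpa using colorable_of_missing_color H c j hj

set_option maxHeartbeats 1000000 in
theorem key : ∀ (n : ℕ) (W : Type*) [Fintype W] (H : SimpleGraph W),
    Fintype.card W ≤ n → Cond H → H.Colorable H.cliqueNum := by
  intro n
  induction n with
  | zero =>
    intro W _ H hcard _
    have : IsEmpty W := Fintype.card_eq_zero_iff.mp (Nat.le_zero.mp hcard)
    exact Colorable.of_isEmpty (G := H) _
  | succ n IH =>
    intro W instW H hcard hcond
    classical
    by_contra hcol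
    have hne : Nonempty W := by
      by_contra hempty
      rw [not_nonempty_iff] at hempty
      exact hcol (Colorable.of_isEmpty (G := H) _)
    set ω := H.cliqueNum with hωdef
    set α := Hᶜ.cliqueNum with hαdef
    have hω : 1 ≤ ω := by
      obtain ⟨w⟩ := hne
      have hcl : H.IsClique (({w} : Finset W) : Set W) := by
        rw [Finset.coe_singleton]; exact Set.pairwise_singleton _ _
      have := IsClique.card_le_cliqueNum (tc := hcl)
      simpa using this
    have hα : 1 ≤ α := by
      obtain ⟨w⟩ := hne
      have hcl : Hᶜ.IsClique (({w} : Finset W) : Set W) := by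
        rw [Finset.coe_singleton]; exact Set.pairwise_singleton _ _
      have := IsClique.card_le_cliqueNum (tc := hcl)
      exact le_trans (by simp) this
    have hn : Fintype.card W ≤ ω * α := by
      have huniv := hcond Set.univ
      haveI : Fintype ↥(Set.univ : Set W) := Fintype.ofFinite _
      have h1 : (H.induce Set.univ).cliqueNum = ω := cliqueNum_eq_of_iso (induceUnivIso H)
      have h2 : ((H.induce Set.univ)ᶜ).cliqueNum = α :=
        cliqueNum_eq_of_iso (isoCompl (induceUnivIso H))
      have h3 : Nat.card ↥(Set.univ : Set W) = Fintype.card W := by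
        rw [Nat.card_congr (Equiv.Set.univ W), Nat.card_eq_fintype_card]
      rw [h1, h2, h3] at huniv
      exact huniv
    have IHind : ∀ t : Set W, t ≠ Set.univ →
        (H.induce t).Colorable (H.induce t).cliqueNum := by
      intro t ht
      haveI : Fintype ↥t := Fintype.ofFinite _
      refine IH ↥t (H.induce t) ?_ (cond_induce hcond t)
      have h4 : Nat.card ↥t < Nat.card W := by
        rw [Nat.card_coe_set_eq, ← Set.ncard_univ]
        exact Set.ncard_lt_ncard (Set.ssubset_univ_iff.mpr ht) Set.finite_univ
      rw [Nat.card_eq_fintype_card, Nat.card_eq_fintype_card] at h4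
      omega
    have hstep : ∀ S : Set W, S.Nonempty → (∀ a ∈ S, ∀ b ∈ S, a ≠ b → ¬H.Adj a b) →
        (H.induce Sᶜ).Colorable ω ∧
          ∃ C : Finset W, H.IsNClique ω C ∧ ∀ x ∈ C, x ∉ S := by
      intro S hSne hstab
      have ht : Sᶜ ≠ Set.univ := by
        intro hcompl
        rw [Set.compl_univ_iff] at hcompl
        rw [hcompl] at hSne
        exact Set.not_nonempty_empty hSne
      have hcol' := IHind Sᶜ ht
      haveI : Fintype ↥(Sᶜ) := Fintype.ofFinite _
      set k := (H.induce Sᶜ).cliqueNum with hkdef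
      have hk_le : k ≤ ω := cliqueNum_le_of_embedding (SimpleGraph.Embedding.induce Sᶜ)
      have hext : H.Colorable (k + 1) := colorable_succ_of_stable H S hstab hcol'
      have hk_ge : ω ≤ k := by
        by_contra hlt
        push_neg at hlt
        exact hcol (Colorable.mono hlt hext)
      have hkω : k = ω := le_antisymm hk_le hk_ge
      constructor
      · rw [← hkω]; exact hcol'
      · obtain ⟨C', hC'⟩ := (H.induce Sᶜ).exists_isNClique_cliqueNum
        refine ⟨C'.map (SimpleGraph.Embedding.induce (G := H) Sᶜ).toEmbedding, ?_, ?_⟩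
        · have h5 := isNClique_map_embedding (SimpleGraph.Embedding.induce Sᶜ) hC'
          rwa [← hkdef, hkω] at h5
        · intro x hx
          rw [Finset.mem_map] at hx
          obtain ⟨a, _, rfl⟩ := hx
          exact a.2
    -- a maximum stable set, enumerated
    obtain ⟨S₀, hS₀⟩ := Hᶜ.exists_isNClique_cliqueNum
    have hS₀stab : ∀ a ∈ S₀, ∀ b ∈ S₀, a ≠ b → ¬H.Adj a b := by
      intro a ha b hb hab
      exact (hS₀.1 (Finset.mem_coe.mpr ha) (Finset.mem_coe.mpr hb) hab).2
    set e₀ := S₀.equivFinOfCardEq hS₀.2 with he₀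
    set v : Fin α → W := fun i => ↑(e₀.symm i) with hvdef
    have hvinj : Function.Injective v := by
      intro i j hij
      exact e₀.symm.injective (Subtype.ext hij)
    have hvmem : ∀ i, v i ∈ S₀ := fun i => (e₀.symm i).2
    have hω0 : 0 < ω := hω
    -- colorings of the vertex-deleted graphs
    have hcoli : ∀ i : Fin α, (H.induce ({v i}ᶜ : Set W)).Colorable ω := by
      intro i
      refine (hstep {v i} (Set.singleton_nonempty _) ?_).1
      intro a ha b hb hab
      rw [Set.mem_singleton_iff] at ha hb
      exact absurd (ha.trans hb.symm) hab
    have c : ∀ i : Fin α, (H.induce ({v i}ᶜ : Set W)).Coloring (Fin ω) :=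
      fun i => (hcoli i).some
    set f : Fin α → W → Fin ω :=
      fun i w => if h : w ∈ ({v i}ᶜ : Set W) then c i ⟨w, h⟩ else ⟨0, hω0⟩ with hfdef
    have hfval : ∀ i (w : W) (h : w ∈ ({v i}ᶜ : Set W)), f i w = c i ⟨w, h⟩ := by
      intro i w h
      rw [hfdef]
      exact dif_pos h
    -- the list of stable sets
    have hcardI : Fintype.card (Option (Fin α × Fin ω)) = α * ω + 1 := by
      simp
    set T : Option (Fin α × Fin ω) → Finset W :=
      fun p => p.elim S₀
        (fun ij => Finset.univ.filter (fun w => w ≠ v ij.1 ∧ f ij.1 w = ij.2)) with hTdef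
    have hTstab : ∀ p, ∀ a ∈ T p, ∀ b ∈ T p, a ≠ b → ¬H.Adj a b := by
      rintro (_ | ⟨i, j⟩) a ha b hb hab hadj
      · exact hS₀stab a ha b hb hab hadj
      · rw [hTdef] at ha hb
        simp only [Option.elim, Finset.mem_filter, Finset.mem_univ, true_and] at ha hb
        obtain ⟨ha1, ha2⟩ := ha
        obtain ⟨hb1, hb2⟩ := hb
        have hadj' : (H.induce ({v i}ᶜ : Set W)).Adj ⟨a, ha1⟩ ⟨b, hb1⟩ := hadj
        apply (c i).valid hadj'
        rw [← hfval i a ha1, ← hfval i b hb1, ha2, hb2]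
    have hTne : ∀ p, (T p).Nonempty := by
      rintro (_ | ⟨i, j⟩)
      · exact ⟨v ⟨0, hα⟩, hvmem _⟩
      · by_contra hempty
        rw [Finset.not_nonempty_iff_eq_empty] at hempty
        have hmiss : ∀ x : ↥({v i}ᶜ : Set W), c i x ≠ j := by
          intro x hx
          have hxmem : (x : W) ∈ T (some (i, j)) := by
            rw [hTdef]
            simp only [Option.elim, Finset.mem_filter, Finset.mem_univ, true_and]
            exact ⟨x.2, by rw [hfval i x x.2]; rw [hx]⟩
          rw [hempty] at hxmem
          exact Finset.notMem_empty _ hxmem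
        have hcol2 := colorable_pred_of_missing_color _ hω (c i) j hmiss
        have hcol3 : H.Colorable ((ω - 1) + 1) := by
          refine colorable_succ_of_stable H {v i} ?_ hcol2
          intro a ha b hb hab
          rw [Set.mem_singleton_iff] at ha hb
          exact absurd (ha.trans hb.symm) hab
        have hco : (ω - 1) + 1 = ω := by omega
        rw [hco] at hcol3
        exact hcol hcol3
    -- the cliques
    have hCex : ∀ p, ∃ C : Finset W, H.IsNClique ω C ∧ ∀ x ∈ C, x ∉ T p := by
      intro p
      have h9 := (hstep (↑(T p) : Set W) (Finset.coe_nonempty.mpr (hTne p))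
        (fun a ha b hb hab => hTstab p a (Finset.mem_coe.mp ha) b (Finset.mem_coe.mp hb) hab)).2
      obtain ⟨C, hC1, hC2⟩ := h9
      exact ⟨C, hC1, fun x hx hxT => hC2 x hx (Finset.mem_coe.mpr hxT)⟩
    choose C hCclique hCdisj using hCex
    -- Step A: a clique meets each stable set at most once
    have hA : ∀ (D : Finset W), H.IsClique ↑D → ∀ p, (D ∩ T p).card ≤ 1 := by
      intro D hD p
      rw [Finset.card_le_one]
      intro a ha b hb
      by_contra hab
      rw [Finset.mem_inter] at ha hb
      exact hTstab p a ha.2 b hb.2 hab (hD ha.1 hb.1 hab)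
    -- Step B: an ω-clique has total intersection count α * ω
    have hB : ∀ (D : Finset W), H.IsNClique ω D → ∑ p, (D ∩ T p).card = α * ω := by
      intro D hD
      rw [Fintype.sum_option, Fintype.sum_prod_type]
      have hfix : ∀ i : Fin α, ∑ j : Fin ω, (D ∩ T (some (i, j))).card =
          (D.filter (fun w => w ≠ v i)).card := by
        intro i
        rw [Finset.card_eq_sum_card_fiberwise
          (f := f i) (t := Finset.univ) (fun x _ => Finset.mem_univ _)]
        apply Finset.sum_congr rfl
        intro j _
        congr 1
        ext w
        rw [hTdef]
        simp only [Option.elim, Finset.mem_inter, Finset.mem_filter, Finset.mem_univ, true_and]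
        tauto
      rw [Finset.sum_congr rfl (fun i _ => hfix i)]
      have hsplit : ∀ i : Fin α,
          (D.filter (fun w => w ≠ v i)).card + (if v i ∈ D then 1 else 0) = ω := by
        intro i
        have h6 := Finset.card_filter_add_card_filter_not
          (s := D) (p := fun w => w ≠ v i)
        have h7 : (D.filter (fun w => ¬ w ≠ v i)).card = (if v i ∈ D then 1 else 0) := by
          by_cases hvD : v i ∈ D
          · rw [if_pos hvD, Finset.card_eq_one]
            refine ⟨v i, ?_⟩
            ext x
            simp only [Finset.mem_filter, not_not, Finset.mem_singleton]
            constructor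
            · rintro ⟨-, h⟩; exact h
            · rintro rfl; exact ⟨hvD, rfl⟩
          · rw [if_neg hvD, Finset.card_eq_zero]
            apply Finset.eq_empty_of_forall_notMem
            intro x hx
            rw [Finset.mem_filter, not_not] at hx
            exact hvD (hx.2 ▸ hx.1)
        rw [h7] at h6
        rw [h6, hD.2]
      have hS0card : (D ∩ T none).card = ∑ i : Fin α, (if v i ∈ D then 1 else 0) := by
        have himg : Finset.univ.image v = S₀ := by
          apply Finset.eq_of_subset_of_card_le
          · intro x hx
            rw [Finset.mem_image] at hx
            obtain ⟨i, _, rfl⟩ := hx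
            exact hvmem i
          · rw [Finset.card_image_of_injective _ hvinj, Finset.card_univ, Fintype.card_fin,
              hS₀.2]
        have hTn : T none = S₀ := rfl
        rw [hTn, ← himg]
        have hinter : D ∩ Finset.univ.image v =
            (Finset.univ.filter (fun i => v i ∈ D)).image v := by
          ext w
          simp only [Finset.mem_inter, Finset.mem_image, Finset.mem_filter, Finset.mem_univ,
            true_and]
          constructor
          · rintro ⟨hw, i, rfl⟩
            exact ⟨i, hw, rfl⟩
          · rintro ⟨i, hi, rfl⟩
            exact ⟨hi, i, rfl⟩
        rw [hinter, Finset.card_image_of_injective _ hvinj, Finset.card_filter]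
      have h8 : ∑ i : Fin α, ((D.filter (fun w => w ≠ v i)).card) +
          ∑ i : Fin α, (if v i ∈ D then 1 else 0) = α * ω := by
        rw [← Finset.sum_add_distrib]
        rw [Finset.sum_congr rfl (fun i _ => hsplit i)]
        simp [Finset.sum_const, Finset.card_univ, mul_comm]
      rw [hS0card]
      omega
    -- diagonal entries vanish
    have hdiag : ∀ p, (C p ∩ T p).card = 0 := by
      intro p
      rw [Finset.card_eq_zero]
      apply Finset.eq_empty_of_forall_notMem
      intro x hx
      rw [Finset.mem_inter] at hx
      exact hCdisj p x hx.1 hx.2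
    -- off-diagonal entries are 1
    have hC1 : ∀ p q, (C p ∩ T q).card = (if q = p then 0 else 1) := by
      intro p q
      by_cases hpq : q = p
      · rw [if_pos hpq, hpq]
        exact hdiag p
      · rw [if_neg hpq]
        have hle := hA (C p) (hCclique p).1 q
        have hsum := hB (C p) (hCclique p)
        by_contra hneq
        have h0 : (C p ∩ T q).card = 0 := by omega
        have he' := Finset.sum_erase_add Finset.univ (fun r => (C p ∩ T r).card)
          (Finset.mem_univ p)
        beta_reduce at he'
        rw [hdiag p, add_zero, hsum] at he'
        have hlt : ∑ r ∈ Finset.univ.erase p, (C p ∩ T r).card <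
            ∑ r ∈ Finset.univ.erase p, 1 := by
          refine Finset.sum_lt_sum (fun r _ => hA (C p) (hCclique p).1 r) ?_
          exact ⟨q, Finset.mem_erase.mpr ⟨hpq, Finset.mem_univ q⟩, by omega⟩
        rw [Finset.sum_const, smul_eq_mul, mul_one, Finset.card_erase_of_mem (Finset.mem_univ p),
          Finset.card_univ, hcardI] at hlt
        omega
    -- the matrices
    set A : Matrix (Option (Fin α × Fin ω)) W ℚ :=
      Matrix.of (fun p w => if w ∈ T p then 1 else 0) with hAdef
    set B : Matrix W (Option (Fin α × Fin ω)) ℚ :=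
      Matrix.of (fun w q => if w ∈ C q then 1 else 0) with hBdef
    have hAB : A * B = Matrix.of (fun p q => if p = q then 0 else 1) := by
      ext p q
      rw [Matrix.mul_apply, Matrix.of_apply]
      have hterm : ∀ w, (A p w) * (B w q) = if w ∈ T p ∩ C q then (1:ℚ) else 0 := by
        intro w
        rw [hAdef, hBdef]
        simp only [Matrix.of_apply, Finset.mem_inter]
        by_cases h1 : w ∈ T p <;> by_cases h2 : w ∈ C q <;> simp [h1, h2]
      rw [Finset.sum_congr rfl (fun w _ => hterm w)]
      rw [Finset.sum_ite_mem, Finset.univ_inter, Finset.sum_const, nsmul_eq_mul, mul_one]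
      have h10 := hC1 q p
      rw [Finset.inter_comm] at h10
      rw [h10]
      split_ifs with h <;> simp
    have hI2 : 2 ≤ Fintype.card (Option (Fin α × Fin ω)) := by
      rw [hcardI]
      have : 1 ≤ α * ω := Nat.mul_le_mul hα hω
      omega
    have hfin := matrix_card_le hI2 A B hAB
    rw [hcardI] at hfin
    have hfin2 : α * ω + 1 ≤ ω * α := le_trans hfin hn
    rw [mul_comm] at hfin2
    omega

end WPGTaux

/-- A graph is perfect if every induced subgraph has chromatic number equal to
its clique number. -/
def IsPerfect {V : Type*} (G : SimpleGraph V) : Prop :=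
  ∀ s : Set V, (G.induce s).chromaticNumber = ((G.induce s).cliqueNum : ℕ∞)

lemma isPerfect_iff_cond {V : Type*} [Fintype V] (G : SimpleGraph V) :
    IsPerfect G ↔ WPGTaux.Cond G := by
  constructor
  · intro h s
    haveI : Fintype ↥s := Fintype.ofFinite _
    have hcol := WPGTaux.colorable_cliqueNum_of_chrom_eq _ (h s)
    have h2 := WPGTaux.card_le_mul_of_colorable (G.induce s) hcol
    rw [Nat.card_eq_fintype_card]
    exact h2
  · intro h s
    haveI : Fintype ↥s := Fintype.ofFinite _
    exact WPGTaux.chromaticNumber_eq_cliqueNum_of_colorable _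
      (WPGTaux.key (Fintype.card ↥s) ↥s (G.induce s) le_rfl (WPGTaux.cond_induce h s))

/-- Weak Perfect Graph Theorem: a finite simple graph is perfect iff its complement is. -/
theorem isPerfect_iff_isPerfect_compl {V : Type*} [Fintype V] (G : SimpleGraph V) :
    IsPerfect G ↔ IsPerfect Gᶜ := by
  rw [isPerfect_iff_cond, isPerfect_iff_cond]
  constructor
  · exact WPGTaux.cond_compl
  · intro h
    have h2 := WPGTaux.cond_compl h
    rwa [compl_compl] at h2
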